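/- With w_ν(ω,σ,I) as in the recursive construction (ε = 3^{-k}, p as defined, I = [a, a+h)): for every ν ≥ 0 and every 0 < τ < h, (1/τ)∫_a^{a+τ} w_ν(ω,σ,I) ≤ 3ω and (1/τ)∫_{a+h−τ}^{a+h} w_ν(ω,σ,I) ≤ (9/2)ω. -/

import Mathlib

open MeasureTheory

/-- `ε = 3^{-k}`. -/
noncomputable def eps (k : ℕ) : ℝ := (3:ℝ) ^ (-(k:ℤ))

/-- `p = (1/(3ε))((1+ε)/2 + 4ε²/(1+ε))`. -/
noncomputable def pp (k : ℕ) : ℝ := (1/(3 * eps k)) * ((1 + eps k)/2 + 4 * (eps k)^2/(1 + eps k))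

/-- `u = √p + √(p−1)`, the larger root of `u + 1/u = 2√p`. -/
noncomputable def uu (k : ℕ) : ℝ := Real.sqrt (pp k) + Real.sqrt (pp k - 1)

/-- The recursively defined weights `w_ν(ω, σ, I)` of the paper, on `I = [a, a+h)`
(the dual parameter `σ` is determined by `ωσ = p` and is omitted).
`W k ν ω a h` equals `w_ν(ω, p/ω, [a, a+h))` and vanishes outside `[a, a+h)`.

For `ν = 0`: `w₀ = (ω/√p)(u χ_{I₋} + u⁻¹ χ_{I₊})`.

For `ν ≥ 1`, with `I_m` the right subinterval of `I` of length `3^{-m}|I|` and `J^{(i)}`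
the `i`-th third of `J`:
`w_ν = (ω/p)(Σ_{m=0}^{k-2} χ_{I_m^{(1)}} + χ_{I_{k-1}^{(1)} ∪ I_{k-1}^{(2)}}
+ (4ε/(1+ε)) χ_{I_{k-1}^{(3)}}) + Σ_{m=0}^{k-2} w_{ν-1}(2ω, σ/2, I_m^{(2)})`. -/
noncomputable def W (k : ℕ) : ℕ → ℝ → ℝ → ℝ → ℝ → ℝ
  | 0, ω, a, h, x =>
      Set.indicator (Set.Ico a (a + h/2)) (fun _ => ω / Real.sqrt (pp k) * uu k) x +
      Set.indicator (Set.Ico (a + h/2) (a + h)) (fun _ => ω / Real.sqrt (pp k) / uu k) x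
  | (ν+1), ω, a, h, x =>
      (∑ m ∈ Finset.range (k-1),
        Set.indicator (Set.Ico (a + h - (3:ℝ)^(-(m:ℤ))*h) (a + h - (2/3)*(3:ℝ)^(-(m:ℤ))*h))
          (fun _ => ω / pp k) x) +
      Set.indicator (Set.Ico (a + h - (3:ℝ)^(1-(k:ℤ))*h) (a + h - (1/3)*(3:ℝ)^(1-(k:ℤ))*h))
        (fun _ => ω / pp k) x +
      Set.indicator (Set.Ico (a + h - (1/3)*(3:ℝ)^(1-(k:ℤ))*h) (a + h))
        (fun _ => (4 * eps k/(1 + eps k)) * (ω / pp k)) x +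
      ∑ m ∈ Finset.range (k-1),
        W k ν (2*ω) (a + h - (2/3)*(3:ℝ)^(-(m:ℤ))*h) ((1/3)*(3:ℝ)^(-(m:ℤ))*h) x

section AuxLemmas
lemma eps_pos (k : ℕ) : 0 < eps k := by unfold eps; positivity

lemma eps_le (k : ℕ) (hk : 2 ≤ k) : eps k ≤ 1/9 := by
  have : (3:ℝ) ^ (-(k:ℤ)) ≤ (3:ℝ) ^ (-(2:ℤ)) := by
    apply zpow_le_zpow_right₀ (by norm_num)
    omega
  simpa [eps] using this.trans_eq (by norm_num)

lemma pp_ge (k : ℕ) (hk : 2 ≤ k) : 3/2 ≤ pp k := by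
  have h1 := eps_pos k
  have h2 := eps_le k hk
  have hX : (1/2:ℝ) ≤ (1 + eps k)/2 + 4 * (eps k)^2/(1 + eps k) := by
    have : (0:ℝ) ≤ 4 * (eps k)^2/(1 + eps k) := by positivity
    linarith
  have h3 : (3:ℝ) ≤ 1/(3 * eps k) := by
    rw [le_div_iff₀ (by linarith)]; linarith
  calc (3/2:ℝ) = 3 * (1/2) := by norm_num
    _ ≤ (1/(3 * eps k)) * ((1 + eps k)/2 + 4 * (eps k)^2/(1 + eps k)) :=
        mul_le_mul h3 hX (by norm_num) (by positivity)
    _ = pp k := rfl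

lemma sqrt_pp_ge_one (k : ℕ) (hk : 2 ≤ k) : 1 ≤ Real.sqrt (pp k) := by
  rw [show (1:ℝ) = Real.sqrt 1 from (Real.sqrt_one).symm]
  exact Real.sqrt_le_sqrt (by linarith [pp_ge k hk])

lemma uu_ge_one (k : ℕ) (hk : 2 ≤ k) : 1 ≤ uu k := by
  have := Real.sqrt_nonneg (pp k - 1)
  have := sqrt_pp_ge_one k hk
  unfold uu; linarith

lemma uu_id (k : ℕ) (hk : 2 ≤ k) : uu k ^ 2 + 1 = 2 * Real.sqrt (pp k) * uu k := by
  have hp := pp_ge k hk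
  have hs : Real.sqrt (pp k) ^ 2 = pp k := Real.sq_sqrt (by linarith)
  have ht : Real.sqrt (pp k - 1) ^ 2 = pp k - 1 := Real.sq_sqrt (by linarith)
  unfold uu; nlinarith [hs, ht]

lemma uu_le (k : ℕ) (hk : 2 ≤ k) : uu k ≤ 2 * Real.sqrt (pp k) := by
  have : Real.sqrt (pp k - 1) ≤ Real.sqrt (pp k) := Real.sqrt_le_sqrt (by linarith)
  unfold uu; linarith

lemma integ_ind (c d v : ℝ) (h : c ≤ d) :
    ∫ x, Set.indicator (Set.Ico c d) (fun _ => v) x = v * (d - c) := by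
  rw [MeasureTheory.integral_indicator measurableSet_Ico, setIntegral_const, measureReal_def, Real.volume_Ico,
    smul_eq_mul, ENNReal.toReal_ofReal (by linarith)]
  ring

lemma integrable_ind (c d v : ℝ) :
    Integrable (fun x => Set.indicator (Set.Ico c d) (fun _ => v) x) := by
  rw [show (fun x => Set.indicator (Set.Ico c d) (fun _ => v) x) = Set.indicator (Set.Ico c d) (fun _ => v) from rfl,
    integrable_indicator_iff measurableSet_Ico]
  exact integrableOn_const measure_Ico_lt_top.ne

lemma t3_pos (m : ℕ) : 0 < (3:ℝ)^(-(m:ℤ)) := by positivity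
lemma t3_le_one (m : ℕ) : (3:ℝ)^(-(m:ℤ)) ≤ 1 := by
  apply zpow_le_one_of_nonpos₀ (by norm_num) (by omega)

lemma t3k_eq (k : ℕ) : (3:ℝ)^(1-(k:ℤ)) = 3 * eps k := by
  rw [eps, sub_eq_add_neg, zpow_add₀ (by norm_num : (3:ℝ) ≠ 0)]; norm_num

lemma t3k_pos (k : ℕ) : 0 < (3:ℝ)^(1-(k:ℤ)) := by positivity
lemma t3k_le_one (k : ℕ) (hk : 2 ≤ k) : (3:ℝ)^(1-(k:ℤ)) ≤ 1 := by
  apply zpow_le_one_of_nonpos₀ (by norm_num) (by omega)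

lemma W_nonneg (k : ℕ) (hk : 2 ≤ k) : ∀ (ν : ℕ) (ω a h x : ℝ), 0 ≤ ω →
    0 ≤ W k ν ω a h x := by
  have hp : (0:ℝ) < pp k := by linarith [pp_ge k hk]
  have hu : (0:ℝ) < uu k := by linarith [uu_ge_one k hk]
  have hs : (0:ℝ) < Real.sqrt (pp k) := by linarith [sqrt_pp_ge_one k hk]
  have he := eps_pos k
  intro ν
  induction ν with
  | zero =>
    intro ω a h x hω
    simp only [W]
    have h1 : 0 ≤ ω / Real.sqrt (pp k) * uu k := by positivity
    have h2 : 0 ≤ ω / Real.sqrt (pp k) / uu k := by positivity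
    exact add_nonneg (Set.indicator_nonneg (fun _ _ => h1) x)
      (Set.indicator_nonneg (fun _ _ => h2) x)
  | succ ν ih =>
    intro ω a h x hω
    simp only [W]
    have h1 : 0 ≤ ω / pp k := by positivity
    have h2 : 0 ≤ (4 * eps k/(1 + eps k)) * (ω / pp k) := by positivity
    refine add_nonneg (add_nonneg (add_nonneg ?_ ?_) ?_) ?_
    · exact Finset.sum_nonneg fun m _ => Set.indicator_nonneg (fun _ _ => h1) x
    · exact Set.indicator_nonneg (fun _ _ => h1) x
    · exact Set.indicator_nonneg (fun _ _ => h2) x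
    · exact Finset.sum_nonneg fun m _ => ih (2*ω) _ _ x (by linarith)

lemma W_eq_zero (k : ℕ) (hk : 2 ≤ k) : ∀ (ν : ℕ) (ω a h x : ℝ), 0 ≤ h →
    (x < a ∨ a + h ≤ x) → W k ν ω a h x = 0 := by
  intro ν
  induction ν with
  | zero =>
    intro ω a h x hh hx
    simp only [W]
    rw [Set.indicator_of_notMem, Set.indicator_of_notMem, add_zero]
    · rintro ⟨h1, h2⟩; rcases hx with hx | hx <;> [linarith; linarith]
    · rintro ⟨h1, h2⟩; rcases hx with hx | hx <;> [linarith; linarith]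
  | succ ν ih =>
    intro ω a h x hh hx
    have hm : ∀ m : ℕ, 0 < (3:ℝ)^(-(m:ℤ))*h ∨ True := fun m => Or.inr trivial
    simp only [W]
    have z1 : ∀ m ∈ Finset.range (k-1),
        Set.indicator (Set.Ico (a + h - (3:ℝ)^(-(m:ℤ))*h) (a + h - (2/3)*(3:ℝ)^(-(m:ℤ))*h))
          (fun _ => ω / pp k) x = 0 := by
      intro m _
      apply Set.indicator_of_notMem
      rintro ⟨h1, h2⟩
      have := t3_le_one m; have := t3_pos m
      have e1 : (3:ℝ)^(-(m:ℤ))*h ≤ h := by nlinarith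
      have e2 : 0 ≤ (2/3)*(3:ℝ)^(-(m:ℤ))*h := by positivity
      rcases hx with hx | hx <;> linarith
    have z4 : ∀ m ∈ Finset.range (k-1),
        W k ν (2*ω) (a + h - (2/3)*(3:ℝ)^(-(m:ℤ))*h) ((1/3)*(3:ℝ)^(-(m:ℤ))*h) x = 0 := by
      intro m _
      apply ih
      · positivity
      · have := t3_le_one m; have := t3_pos m
        rcases hx with hx | hx
        · left
          have e1 : (3:ℝ)^(-(m:ℤ))*h ≤ h := by nlinarith
          linarith
        · right; nlinarith
    rw [Finset.sum_eq_zero z1, Finset.sum_eq_zero z4,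
      Set.indicator_of_notMem, Set.indicator_of_notMem]
    · ring
    · rintro ⟨h1, h2⟩
      have := t3k_le_one k hk; have := t3k_pos k
      rcases hx with hx | hx <;> nlinarith
    · rintro ⟨h1, h2⟩
      have := t3k_le_one k hk; have := t3k_pos k
      rcases hx with hx | hx <;> nlinarith

lemma W_integrable (k : ℕ) : ∀ (ν : ℕ) (ω a h : ℝ),
    Integrable (fun x => W k ν ω a h x) := by
  intro ν
  induction ν with
  | zero =>
    intro ω a h
    simp only [W]
    exact (integrable_ind _ _ _).add (integrable_ind _ _ _)
  | succ ν ih =>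
    intro ω a h
    simp only [W]
    refine (((integrable_finset_sum _ fun m _ => integrable_ind _ _ _).add
      (integrable_ind _ _ _)).add (integrable_ind _ _ _)).add
      (integrable_finset_sum _ fun m _ => ih _ _ _)

lemma integral_add4 {μ : MeasureTheory.Measure ℝ} {f g h i : ℝ → ℝ} (hf : Integrable f μ)
    (hg : Integrable g μ) (hh : Integrable h μ) (hi : Integrable i μ) :
    ∫ x, (f x + g x + h x + i x) ∂μ
      = (∫ x, f x ∂μ) + (∫ x, g x ∂μ) + (∫ x, h x ∂μ) + (∫ x, i x ∂μ) := by
  have hfg : Integrable (fun x => f x + g x) μ := hf.add hg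
  have hfgh : Integrable (fun x => f x + g x + h x) μ := hfg.add hh
  rw [integral_add hfgh hi, integral_add hfg hh, integral_add hf hg]

lemma geom_G (k : ℕ) (hk : 2 ≤ k) :
    ∑ m ∈ Finset.range (k-1), (3:ℝ)^(-(m:ℤ)) = (3/2)*(1 - 3*eps k) := by
  have cast : ∀ m : ℕ, (3:ℝ)^(-(m:ℤ)) = (1/3:ℝ)^m := by
    intro m
    rw [zpow_neg, zpow_natCast, ← inv_pow]
    norm_num
  have hg := geom_sum_eq (by norm_num : (1/3:ℝ) ≠ 1) (k-1)
  have hpow : (1/3:ℝ)^(k-1) = 3 * eps k := by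
    have h1 : ((1/3:ℝ))^((k-1)+1) = (1/3:ℝ)^(k-1) * (1/3) := pow_succ _ _
    rw [show k-1+1 = k from by omega] at h1
    have h2 : eps k = (1/3:ℝ)^k := by
      rw [eps, zpow_neg, zpow_natCast, ← inv_pow]; norm_num
    rw [h2, h1]; ring
  calc ∑ m ∈ Finset.range (k-1), (3:ℝ)^(-(m:ℤ))
      = ∑ m ∈ Finset.range (k-1), (1/3:ℝ)^m := Finset.sum_congr rfl (fun m _ => cast m)
    _ = ((1/3:ℝ)^(k-1) - 1)/((1/3) - 1) := hg
    _ = (3/2)*(1 - 3*eps k) := by rw [hpow]; ring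

lemma W_integral (k : ℕ) (hk : 2 ≤ k) : ∀ (ν : ℕ) (ω a h : ℝ), 0 ≤ h →
    ∫ x, W k ν ω a h x = ω * h := by
  have hp : (0:ℝ) < pp k := by linarith [pp_ge k hk]
  have hu : (0:ℝ) < uu k := by linarith [uu_ge_one k hk]
  have hs : (0:ℝ) < Real.sqrt (pp k) := by linarith [sqrt_pp_ge_one k hk]
  have he := eps_pos k
  have h1e : (0:ℝ) < 1 + eps k := by linarith
  intro ν
  induction ν with
  | zero =>
    intro ω a h hh
    simp only [W]
    rw [integral_add (integrable_ind _ _ _) (integrable_ind _ _ _),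
      integ_ind _ _ _ (by linarith), integ_ind _ _ _ (by linarith)]
    have key : ω / Real.sqrt (pp k) * uu k + ω / Real.sqrt (pp k) / uu k = 2 * ω := by
      have := uu_id k hk
      field_simp
      linear_combination ω * this
    linear_combination (h/2) * key
  | succ ν ih =>
    intro ω a h hh
    simp only [W]
    rw [integral_add4 (integrable_finset_sum _ fun m _ => integrable_ind _ _ _)
        (integrable_ind _ _ _) (integrable_ind _ _ _)
        (integrable_finset_sum _ fun m _ => W_integrable k ν _ _ _),
      integral_finset_sum _ (fun m _ => integrable_ind _ _ _),
      integral_finset_sum _ (fun m _ => W_integrable k ν _ _ _)]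
    have I1 : ∀ m ∈ Finset.range (k-1),
        (∫ x, Set.indicator (Set.Ico (a + h - (3:ℝ)^(-(m:ℤ))*h) (a + h - (2/3)*(3:ℝ)^(-(m:ℤ))*h))
          (fun _ => ω / pp k) x) = ((ω / pp k) * (1/3) * h) * (3:ℝ)^(-(m:ℤ)) := by
      intro m _
      rw [integ_ind _ _ _ (by nlinarith [t3_pos m])]
      ring
    have I4 : ∀ m ∈ Finset.range (k-1),
        (∫ x, W k ν (2*ω) (a + h - (2/3)*(3:ℝ)^(-(m:ℤ))*h) ((1/3)*(3:ℝ)^(-(m:ℤ))*h) x)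
          = ((2*ω) * (1/3) * h) * (3:ℝ)^(-(m:ℤ)) := by
      intro m _
      rw [ih _ _ _ (by positivity)]
      ring
    rw [Finset.sum_congr rfl I1, Finset.sum_congr rfl I4, ← Finset.mul_sum, ← Finset.mul_sum,
      geom_G k hk, integ_ind _ _ _ (by nlinarith [t3k_pos k]),
      integ_ind _ _ _ (by nlinarith [t3k_pos k]), t3k_eq]
    have key : (1/pp k) * ((1/2)*(1-3*eps k) + 2*eps k + 4*(eps k)^2/(1+eps k)) = 3 * eps k := by
      simp only [pp]
      field_simp
      ring
    linear_combination (ω*h) * key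

lemma t3_anti {j m : ℕ} (h : m ≤ j) : (3:ℝ)^(-(j:ℤ)) ≤ (3:ℝ)^(-(m:ℤ)) :=
  zpow_le_zpow_right₀ (by norm_num) (by omega)

lemma t3_succ (j : ℕ) : (3:ℝ)^(-((j+1:ℕ):ℤ)) = (1/3) * (3:ℝ)^(-(j:ℤ)) := by
  push_cast
  rw [neg_add, zpow_add₀ (by norm_num : (3:ℝ) ≠ 0)]
  norm_num
  ring

lemma t3_le_third {m : ℕ} (hm : 1 ≤ m) : (3:ℝ)^(-(m:ℤ)) ≤ 1/3 := by
  have : (3:ℝ)^(-(m:ℤ)) ≤ (3:ℝ)^(-(1:ℤ)) := zpow_le_zpow_right₀ (by norm_num) (by omega)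
  simpa using this.trans_eq (by norm_num)

lemma t3k_le_third (k : ℕ) (hk : 2 ≤ k) : (3:ℝ)^(1-(k:ℤ)) ≤ 1/3 := by
  have := eps_le k hk
  rw [t3k_eq]; linarith

lemma t3_ge_3eps (k : ℕ) (hk : 2 ≤ k) {m : ℕ} (hm : m ≤ k-1) :
    3 * eps k ≤ (3:ℝ)^(-(m:ℤ)) := by
  have h1 : (3:ℝ)^(1-(k:ℤ)) ≤ (3:ℝ)^(-(m:ℤ)) :=
    zpow_le_zpow_right₀ (by norm_num) (by omega)
  rw [t3k_eq] at h1; exact h1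

lemma ind_le {s : Set ℝ} {v C : ℝ} (x : ℝ) (hv : v ≤ C) (hC : 0 ≤ C) :
    Set.indicator s (fun _ => v) x ≤ C := by
  classical
  by_cases hx : x ∈ s <;> simp [hx, hv, hC]

lemma setInteg_le_const {f : ℝ → ℝ} {c d C : ℝ} (hcd : c ≤ d) (hf : Integrable f)
    (hb : ∀ x ∈ Set.Ico c d, f x ≤ C) : ∫ x in Set.Ico c d, f x ≤ C * (d - c) := by
  have h1 : ∫ x in Set.Ico c d, f x ≤ ∫ x in Set.Ico c d, C :=
    setIntegral_mono_on hf.integrableOn (integrableOn_const measure_Ico_lt_top.ne)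
      measurableSet_Ico hb
  rw [setIntegral_const, measureReal_def, Real.volume_Ico, smul_eq_mul,
    ENNReal.toReal_ofReal (by linarith)] at h1
  rw [mul_comm]; exact h1

lemma W0_pt (k : ℕ) (hk : 2 ≤ k) (ω a h x : ℝ) (hω : 0 ≤ ω) :
    W k 0 ω a h x ≤ 2 * ω := by
  have hu := uu_ge_one k hk
  have hs := sqrt_pp_ge_one k hk
  have hul := uu_le k hk
  have h1 : ω / Real.sqrt (pp k) * uu k ≤ 2 * ω := by
    rw [div_mul_eq_mul_div, div_le_iff₀ (by linarith)]
    nlinarith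
  have h2 : ω / Real.sqrt (pp k) / uu k ≤ 2 * ω := by
    have e1 : ω / Real.sqrt (pp k) ≤ ω := by
      rw [div_le_iff₀ (by linarith)]; nlinarith
    have e2 : ω / Real.sqrt (pp k) / uu k ≤ ω / Real.sqrt (pp k) := by
      rw [div_le_iff₀ (by linarith)]
      nlinarith [div_nonneg hω (by linarith : (0:ℝ) ≤ Real.sqrt (pp k))]
    linarith
  simp only [W]
  by_cases hx : x ∈ Set.Ico a (a + h/2)
  · have hx2 : x ∉ Set.Ico (a + h/2) (a + h) := by
      rintro ⟨u1, u2⟩; exact absurd hx.2 (not_lt.2 u1)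
    rw [Set.indicator_of_mem hx, Set.indicator_of_notMem hx2]; linarith
  · rw [Set.indicator_of_notMem hx, zero_add]
    exact ind_le x h2 (by linarith)

lemma W_left_pt (k : ℕ) (hk : 2 ≤ k) (ν : ℕ) (ω a h x : ℝ) (hω : 0 ≤ ω) (hh : 0 < h)
    (hx1 : a ≤ x) (hx2 : x < a + h/3) : W k (ν+1) ω a h x ≤ ω / pp k := by
  have hp : (0:ℝ) < pp k := by linarith [pp_ge k hk]
  have hA : 0 ≤ ω / pp k := by positivity
  simp only [W]
  have hk1 : 0 < k - 1 := by omega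
  have hsum : ∑ m ∈ Finset.range (k-1),
      Set.indicator (Set.Ico (a + h - (3:ℝ)^(-(m:ℤ))*h) (a + h - (2/3)*(3:ℝ)^(-(m:ℤ))*h))
        (fun _ => ω / pp k) x
      = Set.indicator (Set.Ico (a + h - (3:ℝ)^(-(0:ℕ):ℤ)*h) (a + h - (2/3)*(3:ℝ)^(-(0:ℕ):ℤ)*h))
        (fun _ => ω / pp k) x := by
    apply Finset.sum_eq_single_of_mem 0 (Finset.mem_range.2 hk1)
    intro m _ hm0
    apply Set.indicator_of_notMem
    rintro ⟨u1, u2⟩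
    have := t3_le_third (m := m) (by omega)
    nlinarith
  rw [hsum]
  have z2 : Set.indicator (Set.Ico (a + h - (3:ℝ)^(1-(k:ℤ))*h) (a + h - (1/3)*(3:ℝ)^(1-(k:ℤ))*h))
      (fun _ => ω / pp k) x = 0 := by
    apply Set.indicator_of_notMem
    rintro ⟨u1, u2⟩
    have := t3k_le_third k hk
    nlinarith
  have z3 : Set.indicator (Set.Ico (a + h - (1/3)*(3:ℝ)^(1-(k:ℤ))*h) (a + h))
      (fun _ => (4 * eps k/(1 + eps k)) * (ω / pp k)) x = 0 := by
    apply Set.indicator_of_notMem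
    rintro ⟨u1, u2⟩
    have := t3k_le_third k hk
    have := t3k_pos k
    nlinarith
  have z4 : ∑ m ∈ Finset.range (k-1),
      W k ν (2*ω) (a + h - (2/3)*(3:ℝ)^(-(m:ℤ))*h) ((1/3)*(3:ℝ)^(-(m:ℤ))*h) x = 0 := by
    apply Finset.sum_eq_zero
    intro m _
    apply W_eq_zero k hk ν _ _ _ _ (by positivity)
    left
    have := t3_le_one m
    have := t3_pos m
    nlinarith
  rw [z2, z3, z4, add_zero, add_zero, add_zero]
  apply ind_le x le_rfl hA

lemma W_right_pt (k : ℕ) (hk : 2 ≤ k) (ν : ℕ) (ω a h x : ℝ) (hω : 0 ≤ ω) (hh : 0 < h)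
    (hx1 : a + h - 3 * eps k * h ≤ x) : W k (ν+1) ω a h x ≤ ω / pp k := by
  have hp : (0:ℝ) < pp k := by linarith [pp_ge k hk]
  have he := eps_pos k
  have he9 := eps_le k hk
  have hA : 0 ≤ ω / pp k := by positivity
  simp only [W]
  have z1 : ∑ m ∈ Finset.range (k-1),
      Set.indicator (Set.Ico (a + h - (3:ℝ)^(-(m:ℤ))*h) (a + h - (2/3)*(3:ℝ)^(-(m:ℤ))*h))
        (fun _ => ω / pp k) x = 0 := by
    apply Finset.sum_eq_zero
    intro m hm
    apply Set.indicator_of_notMem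
    rintro ⟨u1, u2⟩
    have h1 : 3 * eps k ≤ (3:ℝ)^(-((m+1:ℕ):ℤ)) :=
      t3_ge_3eps k hk (by have := Finset.mem_range.1 hm; omega)
    rw [t3_succ] at h1
    nlinarith
  have z4 : ∑ m ∈ Finset.range (k-1),
      W k ν (2*ω) (a + h - (2/3)*(3:ℝ)^(-(m:ℤ))*h) ((1/3)*(3:ℝ)^(-(m:ℤ))*h) x = 0 := by
    apply Finset.sum_eq_zero
    intro m hm
    apply W_eq_zero k hk ν _ _ _ _ (by positivity)
    right
    have h1 : 3 * eps k ≤ (3:ℝ)^(-((m+1:ℕ):ℤ)) :=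
      t3_ge_3eps k hk (by have := Finset.mem_range.1 hm; omega)
    rw [t3_succ] at h1
    nlinarith
  rw [z1, z4, zero_add, add_zero]
  rw [t3k_eq]
  by_cases hx : x ∈ Set.Ico (a + h - 3 * eps k*h) (a + h - (1/3)*(3 * eps k)*h)
  · have hx2 : x ∉ Set.Ico (a + h - (1/3)*(3 * eps k)*h) (a + h) := by
      rintro ⟨u1, u2⟩; exact absurd hx.2 (not_lt.2 u1)
    rw [Set.indicator_of_mem hx, Set.indicator_of_notMem hx2]; linarith
  · rw [Set.indicator_of_notMem hx, zero_add]
    apply ind_le x _ hA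
    have h4e : 4 * eps k / (1 + eps k) ≤ 1 := by
      rw [div_le_iff₀ (by linarith)]; linarith
    nlinarith

lemma t3_cast (m : ℕ) : (3:ℝ)^(-(m:ℤ)) = (1/3:ℝ)^m := by
  rw [zpow_neg, zpow_natCast, ← inv_pow]; norm_num

lemma pow_third (k : ℕ) (hk : 2 ≤ k) : (1/3:ℝ)^(k-1) = 3 * eps k := by
  have h1 : ((1/3:ℝ))^((k-1)+1) = (1/3:ℝ)^(k-1) * (1/3) := pow_succ _ _
  rw [show k-1+1 = k from by omega] at h1
  have h2 : eps k = (1/3:ℝ)^k := by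
    rw [eps, zpow_neg, zpow_natCast, ← inv_pow]; norm_num
  rw [h2, h1]; ring

set_option maxHeartbeats 1000000 in
lemma W_tail (k : ℕ) (hk : 2 ≤ k) (ν : ℕ) (ω a h : ℝ) (hω : 0 ≤ ω) (hh : 0 < h)
    (m : ℕ) (hm : m ≤ k-1) :
    ∫ x in Set.Ico (a + h - (3:ℝ)^(-(m:ℤ))*h) (a + h), W k (ν+1) ω a h x
      ≤ (3/2) * (3:ℝ)^(-(m:ℤ)) * ω * h := by
  have hp : (0:ℝ) < pp k := by linarith [pp_ge k hk]
  have he := eps_pos k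
  have he9 := eps_le k hk
  have hA : 0 ≤ ω / pp k := by positivity
  have hA2 : ω / pp k ≤ (2/3) * ω := by
    rw [div_le_iff₀ hp]; nlinarith [pp_ge k hk]
  set T := Set.Ico (a + h - (3:ℝ)^(-(m:ℤ))*h) (a + h) with hT
  have hTmem : ∀ x, x ∈ T ↔ a + h - (3:ℝ)^(-(m:ℤ))*h ≤ x ∧ x < a + h := fun x => Iff.rfl
  simp only [W]
  rw [integral_add4 ((integrable_finset_sum _ fun j _ => integrable_ind _ _ _).integrableOn)
      ((integrable_ind _ _ _).integrableOn) ((integrable_ind _ _ _).integrableOn)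
      ((integrable_finset_sum _ fun j _ => W_integrable k ν _ _ _).integrableOn),
    integral_finset_sum _ (fun j _ => (integrable_ind _ _ _).integrableOn),
    integral_finset_sum _ (fun j _ => (W_integrable k ν _ _ _).integrableOn)]
  -- group 1 bound
  have G1 : ∀ j ∈ Finset.range (k-1),
      (∫ x in T, Set.indicator (Set.Ico (a + h - (3:ℝ)^(-(j:ℤ))*h) (a + h - (2/3)*(3:ℝ)^(-(j:ℤ))*h))
        (fun _ => ω / pp k) x)
      ≤ (if m ≤ j then ((ω / pp k) * (1/3) * h) * (3:ℝ)^(-(j:ℤ)) else 0) := by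
    intro j _
    by_cases hj : m ≤ j
    · rw [if_pos hj]
      have hjm := t3_anti hj
      have hjp := t3_pos j
      rw [setIntegral_eq_integral_of_forall_compl_eq_zero, integ_ind _ _ _ (by nlinarith)]
      · apply le_of_eq; ring
      · intro x hx
        apply Set.indicator_of_notMem
        rintro ⟨u1, u2⟩
        rw [hTmem, not_and_or, not_le, not_lt] at hx
        rcases hx with hx | hx <;> nlinarith
    · rw [if_neg hj]
      apply le_of_eq
      apply setIntegral_eq_zero_of_forall_eq_zero
      intro x hx
      rw [hTmem] at hx
      apply Set.indicator_of_notMem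
      rintro ⟨u1, u2⟩
      have h1 : (3:ℝ)^(-(m:ℤ)) ≤ (1/3) * (3:ℝ)^(-(j:ℤ)) := by
        rw [← t3_succ]; exact t3_anti (by omega)
      have := t3_pos j
      nlinarith [hx.1]
  have G4 : ∀ j ∈ Finset.range (k-1),
      (∫ x in T, W k ν (2*ω) (a + h - (2/3)*(3:ℝ)^(-(j:ℤ))*h) ((1/3)*(3:ℝ)^(-(j:ℤ))*h) x)
      ≤ (if m ≤ j then ((2*ω) * (1/3) * h) * (3:ℝ)^(-(j:ℤ)) else 0) := by
    intro j _
    by_cases hj : m ≤ j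
    · rw [if_pos hj]
      have hjm := t3_anti hj
      have hjp := t3_pos j
      rw [setIntegral_eq_integral_of_forall_compl_eq_zero, W_integral k hk ν _ _ _ (by positivity)]
      · apply le_of_eq; ring
      · intro x hx
        rw [hTmem, not_and_or, not_le, not_lt] at hx
        apply W_eq_zero k hk ν _ _ _ _ (by positivity)
        rcases hx with hx | hx
        · left; nlinarith
        · right; nlinarith
    · rw [if_neg hj]
      apply le_of_eq
      apply setIntegral_eq_zero_of_forall_eq_zero
      intro x hx
      rw [hTmem] at hx
      apply W_eq_zero k hk ν _ _ _ _ (by positivity)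
      right
      have h1 : (3:ℝ)^(-(m:ℤ)) ≤ (1/3) * (3:ℝ)^(-(j:ℤ)) := by
        rw [← t3_succ]; exact t3_anti (by omega)
      nlinarith [hx.1]
  have h3e : 3 * eps k ≤ (3:ℝ)^(-(m:ℤ)) := t3_ge_3eps k hk hm
  have G2 : (∫ x in T, Set.indicator (Set.Ico (a + h - (3:ℝ)^(1-(k:ℤ))*h)
      (a + h - (1/3)*(3:ℝ)^(1-(k:ℤ))*h)) (fun _ => ω / pp k) x)
      = (ω / pp k) * (2 * eps k * h) := by
    rw [setIntegral_eq_integral_of_forall_compl_eq_zero, integ_ind _ _ _ (by nlinarith [t3k_pos k]),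
      t3k_eq]
    · ring
    · intro x hx
      apply Set.indicator_of_notMem
      rintro ⟨u1, u2⟩
      rw [hTmem, not_and_or, not_le, not_lt] at hx
      rw [t3k_eq] at u1 u2
      rcases hx with hx | hx <;> nlinarith
  have G3 : (∫ x in T, Set.indicator (Set.Ico (a + h - (1/3)*(3:ℝ)^(1-(k:ℤ))*h) (a + h))
      (fun _ => (4 * eps k/(1 + eps k)) * (ω / pp k)) x)
      = (4 * eps k/(1 + eps k)) * (ω / pp k) * (eps k * h) := by
    rw [setIntegral_eq_integral_of_forall_compl_eq_zero, integ_ind _ _ _ (by nlinarith [t3k_pos k]),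
      t3k_eq]
    · ring
    · intro x hx
      apply Set.indicator_of_notMem
      rintro ⟨u1, u2⟩
      rw [hTmem, not_and_or, not_le, not_lt] at hx
      rw [t3k_eq] at u1
      rcases hx with hx | hx <;> nlinarith
  have hsplit : ∀ (c : ℝ), ∑ j ∈ Finset.range (k-1), (if m ≤ j then c * (3:ℝ)^(-(j:ℤ)) else 0)
      = c * ((3/2) * ((3:ℝ)^(-(m:ℤ)) - 3 * eps k)) := by
    intro c
    have hmk : m ≤ k - 1 := hm
    rw [Finset.range_eq_Ico, ← Finset.sum_Ico_consecutive _ (Nat.zero_le m) hmk]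
    rw [Finset.sum_eq_zero (fun j hj => by
      rw [if_neg]; have := (Finset.mem_Ico.1 hj).2; omega), zero_add]
    have : ∑ j ∈ Finset.Ico m (k-1), (if m ≤ j then c * (3:ℝ)^(-(j:ℤ)) else 0)
        = ∑ j ∈ Finset.Ico m (k-1), c * (1/3:ℝ)^j := by
      apply Finset.sum_congr rfl
      intro j hj
      rw [if_pos (Finset.mem_Ico.1 hj).1, t3_cast]
    rw [this, ← Finset.mul_sum, geom_sum_Ico (by norm_num : (1/3:ℝ) ≠ 1) hmk,
      pow_third k hk, t3_cast]
    ring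
  calc _ ≤ (∑ j ∈ Finset.range (k-1), (if m ≤ j then ((ω / pp k) * (1/3) * h) * (3:ℝ)^(-(j:ℤ)) else 0))
        + (ω / pp k) * (2 * eps k * h)
        + (4 * eps k/(1 + eps k)) * (ω / pp k) * (eps k * h)
        + (∑ j ∈ Finset.range (k-1), (if m ≤ j then ((2*ω) * (1/3) * h) * (3:ℝ)^(-(j:ℤ)) else 0)) := by
        exact add_le_add (add_le_add (add_le_add (Finset.sum_le_sum G1) G2.le) G3.le)
          (Finset.sum_le_sum G4)
    _ ≤ (3/2) * (3:ℝ)^(-(m:ℤ)) * ω * h := by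
        rw [hsplit, hsplit]
        have hB : 4 * eps k/(1 + eps k) ≤ 1 := by
          rw [div_le_iff₀ (by linarith)]; linarith
        have hB0 : 0 ≤ 4 * eps k/(1 + eps k) := by positivity
        have ht0 := t3_pos m
        nlinarith [mul_le_mul_of_nonneg_right hA2 (by nlinarith : (0:ℝ) ≤ ((3:ℝ)^(-(m:ℤ)) - 3*eps k) * h),
          mul_le_mul_of_nonneg_right hB (by positivity : (0:ℝ) ≤ (ω/pp k) * (eps k * h)),
          mul_le_mul_of_nonneg_right hA2 (by positivity : (0:ℝ) ≤ eps k * h),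
          mul_nonneg (mul_nonneg hω he.le) hh.le,
          mul_nonneg (mul_nonneg hω ht0.le) hh.le]

lemma t3_k2 (k : ℕ) (hk : 2 ≤ k) : (3:ℝ)^(-((k-2:ℕ):ℤ)) = 9 * eps k := by
  have hc : -((k-2:ℕ):ℤ) = 2 + -(k:ℤ) := by push_cast [Nat.cast_sub hk]; ring
  rw [eps, hc, zpow_add₀ (by norm_num : (3:ℝ) ≠ 0)]
  norm_num

lemma div_bound {τ X C D : ℝ} (hτ : 0 < τ) (hX : X ≤ C * τ) (hCD : C ≤ D) : (1/τ) * X ≤ D := by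
  have h1 : (1/τ) * X = X / τ := by ring
  rw [h1, div_le_iff₀ hτ]
  nlinarith

/-- For every `ν ≥ 0` and `0 < τ < h`, the averages of `w_ν(ω,σ,I)` over the initial
segment `[a, a+τ)` and final segment `[a+h−τ, a+h)` of `I = [a, a+h)` are at most `3ω`
and `(9/2)ω` respectively. -/
theorem W_edge_averages (k : ℕ) (hk : 2 ≤ k) (ω σ a h : ℝ) (hω : 0 < ω) (hσ : 0 < σ)
    (hωσ : ω * σ = pp k) (hh : 0 < h) (ν : ℕ) (τ : ℝ) (hτ : 0 < τ) (hτh : τ < h) :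
    (1/τ) * ∫ x in Set.Ico a (a + τ), W k ν ω a h x ≤ 3 * ω ∧
    (1/τ) * ∫ x in Set.Ico (a + h - τ) (a + h), W k ν ω a h x ≤ (9/2) * ω := by
  have hp : (0:ℝ) < pp k := by linarith [pp_ge k hk]
  have he := eps_pos k
  have hAω : ω / pp k ≤ ω := div_le_self hω.le (by linarith [pp_ge k hk])
  match ν with
  | 0 =>
    constructor
    · have hX := setInteg_le_const (f := fun x => W k 0 ω a h x) (by linarith : a ≤ a + τ)
        (W_integrable k 0 ω a h) (fun x _ => W0_pt k hk ω a h x hω.le)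
      exact div_bound (C := 2*ω) hτ (hX.trans (le_of_eq (by ring))) (by linarith)
    · have hX := setInteg_le_const (f := fun x => W k 0 ω a h x) (by linarith : a + h - τ ≤ a + h)
        (W_integrable k 0 ω a h) (fun x _ => W0_pt k hk ω a h x hω.le)
      exact div_bound (C := 2*ω) hτ (hX.trans (le_of_eq (by ring))) (by linarith)
  | ν+1 =>
    constructor
    · by_cases hc : τ ≤ h/3
      · have hb : ∀ x ∈ Set.Ico a (a + τ), W k (ν+1) ω a h x ≤ ω := by
          intro x hx
          exact (W_left_pt k hk ν ω a h x hω.le hh hx.1 (by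
            have := hx.2; linarith)).trans hAω
        have hX := setInteg_le_const (f := fun x => W k (ν+1) ω a h x) (by linarith : a ≤ a + τ)
          (W_integrable k (ν+1) ω a h) hb
        exact div_bound (C := ω) hτ (hX.trans (le_of_eq (by ring))) (by linarith)
      · have h1 : ∫ x in Set.Ico a (a + τ), W k (ν+1) ω a h x ≤ ∫ x, W k (ν+1) ω a h x :=
          setIntegral_le_integral (W_integrable k (ν+1) ω a h)
            (Filter.Eventually.of_forall (fun x => W_nonneg k hk (ν+1) ω a h x hω.le))
        rw [W_integral k hk (ν+1) ω a h hh.le] at h1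
        exact div_bound hτ (h1.trans (by nlinarith : ω * h ≤ (3*ω) * τ)) le_rfl
    · by_cases hc : τ ≤ 3 * eps k * h
      · have hb : ∀ x ∈ Set.Ico (a + h - τ) (a + h), W k (ν+1) ω a h x ≤ ω := by
          intro x hx
          exact (W_right_pt k hk ν ω a h x hω.le hh (by
            have := hx.1; linarith)).trans hAω
        have hX := setInteg_le_const (f := fun x => W k (ν+1) ω a h x)
          (by linarith : a + h - τ ≤ a + h) (W_integrable k (ν+1) ω a h) hb
        exact div_bound (C := ω) hτ (hX.trans (le_of_eq (by ring))) (by linarith)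
      · push_neg at hc
        obtain ⟨m, hm2, hPm, hstrict⟩ : ∃ m : ℕ, m ≤ k-2 ∧ τ ≤ (3:ℝ)^(-(m:ℤ))*h ∧
            (1/3) * (3:ℝ)^(-(m:ℤ))*h < τ := by
          classical
          refine ⟨Nat.findGreatest (fun m => τ ≤ (3:ℝ)^(-(m:ℤ))*h) (k-2),
            Nat.findGreatest_le _, Nat.findGreatest_spec (P := fun m => τ ≤ (3:ℝ)^(-(m:ℤ))*h) (m := 0) (Nat.zero_le _)
              (show τ ≤ (3:ℝ)^(-((0:ℕ):ℤ))*h by norm_num; linarith), ?_⟩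
          have hle := Nat.findGreatest_le (P := fun m => τ ≤ (3:ℝ)^(-(m:ℤ))*h) (k-2)
          by_cases hmk : Nat.findGreatest (fun m => τ ≤ (3:ℝ)^(-(m:ℤ))*h) (k-2) < k - 2
          · have hnot := Nat.findGreatest_is_greatest (P := fun m => τ ≤ (3:ℝ)^(-(m:ℤ))*h)
              (n := k-2) (Nat.lt_succ_self _) (by omega)
            simp only [not_le] at hnot
            calc (1/3) * (3:ℝ)^(-((Nat.findGreatest (fun m => τ ≤ (3:ℝ)^(-(m:ℤ))*h) (k-2) : ℕ)):ℤ)*h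
                = (3:ℝ)^(-((Nat.findGreatest (fun m => τ ≤ (3:ℝ)^(-(m:ℤ))*h) (k-2) + 1 : ℕ)):ℤ)*h := by
                  rw [t3_succ]
              _ < τ := hnot
          · have hmeq : Nat.findGreatest (fun m => τ ≤ (3:ℝ)^(-(m:ℤ))*h) (k-2) = k - 2 := by omega
            rw [hmeq, t3_k2 k hk]
            linarith
        have hsub : Set.Ico (a + h - τ) (a + h) ⊆ Set.Ico (a + h - (3:ℝ)^(-(m:ℤ))*h) (a + h) :=
          fun x hx => ⟨by have := hx.1; simp only [Set.mem_Ico] at *; linarith, hx.2⟩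
        have h1 : ∫ x in Set.Ico (a + h - τ) (a + h), W k (ν+1) ω a h x
            ≤ ∫ x in Set.Ico (a + h - (3:ℝ)^(-(m:ℤ))*h) (a + h), W k (ν+1) ω a h x :=
          setIntegral_mono_set (W_integrable k (ν+1) ω a h).integrableOn
            (Filter.Eventually.of_forall (fun x => W_nonneg k hk (ν+1) ω a h x hω.le))
            (HasSubset.Subset.eventuallyLE hsub)
        have h2 := W_tail k hk ν ω a h hω.le hh m (by omega)
        refine div_bound hτ (h1.trans (h2.trans ?_)) le_rfl
        nlinarith [t3_pos m]
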